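/- For θ = 2π/k with k ≥ 4 even, and α = cos(θ/2)/(4 sin(θ/2)), the double integral ∫₀^∞ ∫₀^ℓ 2α·exp(−αℓ²)·exp(−α(r² + (ℓ−r)²)) dr dℓ equals π√3/9. -/

import Mathlib

open Real MeasureTheory Set Filter

lemma q_pos (t : ℝ) : 0 < 2*t^2 - 2*t + 2 := by nlinarith [sq_nonneg (2*t-1)]
lemma q_ge (t : ℝ) : 3/2 ≤ 2*t^2 - 2*t + 2 := by nlinarith [sq_nonneg (2*t-1)]

lemma gauss_Ioi {b : ℝ} (hb : 0 < b) :
    ∫ r in Ioi (0:ℝ), r * Real.exp (-(b * r ^ 2)) = (2*b)⁻¹ := by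
  have A : ∀ x ∈ Ici (0:ℝ), HasDerivAt (fun x : ℝ => -(2*b)⁻¹ * Real.exp (-(b*x^2)))
      (x * Real.exp (-(b*x^2))) x := by
    intro x _
    have h1 : HasDerivAt (fun x : ℝ => -(b*x^2)) (-(b*(2*x))) x := by
      exact (((hasDerivAt_pow 2 x)).const_mul b).neg.congr_deriv (by norm_num)
    have := (h1.exp).const_mul (-(2*b)⁻¹)
    refine this.congr_deriv ?_
    field_simp
  have hint : IntegrableOn (fun x : ℝ => x * Real.exp (-(b*x^2))) (Ioi 0) := by
    have := (integrable_mul_exp_neg_mul_sq hb).integrableOn (s := Ioi (0:ℝ))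
    simpa [neg_mul] using this
  have htend : Tendsto (fun x : ℝ => -(2*b)⁻¹ * Real.exp (-(b*x^2))) atTop (nhds 0) := by
    have h2 : Tendsto (fun x : ℝ => -(b*x^2)) atTop atBot := by
      have : Tendsto (fun x : ℝ => b*x^2) atTop atTop :=
        (tendsto_pow_atTop two_ne_zero).const_mul_atTop hb
      exact tendsto_neg_atBot_iff.mpr this
    have h3 : Tendsto (fun x : ℝ => Real.exp (-(b*x^2))) atTop (nhds 0) :=
      Real.tendsto_exp_atBot.comp h2
    have := h3.const_mul (-(2*b)⁻¹)
    simpa using this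
  have := integral_Ioi_of_hasDerivAt_of_tendsto' A hint htend
  rw [this]
  simp

lemma arctan_inv_sqrt3 : Real.arctan ((Real.sqrt 3)⁻¹) = π / 6 := by
  have hs3 : Real.sqrt 3 ≠ 0 := (Real.sqrt_pos.mpr (by norm_num)).ne'
  have h : Real.tan (π/6) = (Real.sqrt 3)⁻¹ := by
    rw [Real.tan_eq_sin_div_cos, Real.sin_pi_div_six, Real.cos_pi_div_six]
    field_simp
  rw [← h]
  exact Real.arctan_tan (by linarith [Real.pi_pos]) (by linarith [Real.pi_pos])

lemma arctan_integral : ∫ t in (0:ℝ)..1, (2*t^2 - 2*t + 2)⁻¹ = π * Real.sqrt 3 / 9 := by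
  have hs3 : (0:ℝ) < Real.sqrt 3 := Real.sqrt_pos.mpr (by norm_num)
  have hs3sq : Real.sqrt 3 ^ 2 = 3 := Real.sq_sqrt (by norm_num)
  have hderiv : ∀ t ∈ uIcc (0:ℝ) 1,
      HasDerivAt (fun t : ℝ => (Real.sqrt 3)⁻¹ * Real.arctan ((2*t-1)/Real.sqrt 3))
        ((2*t^2 - 2*t + 2)⁻¹) t := by
    intro t _
    have h1 : HasDerivAt (fun t : ℝ => (2*t-1)/Real.sqrt 3) (2/Real.sqrt 3) t := by
      simpa using (((hasDerivAt_id t).const_mul 2).sub_const 1).div_const (Real.sqrt 3)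
    have h2 := (Real.hasDerivAt_arctan ((2*t-1)/Real.sqrt 3)).comp t h1
    have h3 := h2.const_mul ((Real.sqrt 3)⁻¹)
    refine h3.congr_deriv ?_
    rw [div_pow, hs3sq]
    have hq : (2*t^2-2*t+2) ≠ 0 := (q_pos t).ne'
    have hd : (0:ℝ) < 1 + (2*t-1)^2/3 := by positivity
    field_simp
    have ht : t*(t-1)+1 ≠ 0 := by nlinarith [sq_nonneg (2*t-1)]
    rw [hs3sq]
    field_simp
    ring
  have hcont : IntervalIntegrable (fun t : ℝ => (2*t^2 - 2*t + 2)⁻¹) volume 0 1 := by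
    apply Continuous.intervalIntegrable
    exact (by continuity : Continuous fun t : ℝ => 2*t^2-2*t+2).inv₀ (fun t => (q_pos t).ne')
  rw [intervalIntegral.integral_eq_sub_of_hasDerivAt hderiv hcont]
  have e1 : ((2:ℝ)*1-1)/Real.sqrt 3 = (Real.sqrt 3)⁻¹ := by norm_num [one_div]
  have e0 : ((2:ℝ)*0-1)/Real.sqrt 3 = -((Real.sqrt 3)⁻¹) := by norm_num [neg_div, one_div]
  simp only [e1, e0, Real.arctan_neg, arctan_inv_sqrt3]
  field_simp
  linear_combination (-6) * hs3sq

lemma key (α : ℝ) (hα : 0 < α) :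
    (∫ ℓ in Set.Ioi (0:ℝ),
        ∫ r in (0:ℝ)..ℓ,
          2 * α * Real.exp (-(α * ℓ ^ 2)) * Real.exp (-(α * (r ^ 2 + (ℓ - r) ^ 2))))
      = π * Real.sqrt 3 / 9 := by
  have step1 : ∀ ℓ ∈ Ioi (0:ℝ),
      (∫ r in (0:ℝ)..ℓ,
          2 * α * Real.exp (-(α * ℓ ^ 2)) * Real.exp (-(α * (r ^ 2 + (ℓ - r) ^ 2))))
        = ∫ t in Ioc (0:ℝ) 1, ℓ * (2 * α * Real.exp (-(α * (2*t^2-2*t+2) * ℓ ^ 2))) := by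
    intro ℓ hℓ
    have hsub := intervalIntegral.smul_integral_comp_mul_left
      (fun r => 2 * α * Real.exp (-(α * ℓ ^ 2)) * Real.exp (-(α * (r ^ 2 + (ℓ - r) ^ 2))))
      (a := 0) (b := 1) ℓ
    rw [mul_zero, mul_one] at hsub
    rw [← hsub, ← intervalIntegral.integral_smul]
    rw [intervalIntegral.integral_of_le zero_le_one]
    apply setIntegral_congr_fun measurableSet_Ioc
    intro t _
    simp only [smul_eq_mul]
    rw [mul_assoc (2*α), ← Real.exp_add]
    congr 2
    ring
  rw [setIntegral_congr_fun measurableSet_Ioi step1]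
  have hfub : Integrable (Function.uncurry fun ℓ t =>
      ℓ * (2 * α * Real.exp (-(α * (2*t^2-2*t+2) * ℓ ^ 2))))
      ((volume.restrict (Ioi (0:ℝ))).prod (volume.restrict (Ioc (0:ℝ) 1))) := by
    have hmeas : AEStronglyMeasurable (Function.uncurry fun ℓ t =>
        ℓ * (2 * α * Real.exp (-(α * (2*t^2-2*t+2) * ℓ ^ 2))))
        ((volume.restrict (Ioi (0:ℝ))).prod (volume.restrict (Ioc (0:ℝ) 1))) := by
      apply Continuous.aestronglyMeasurable
      apply Continuous.mul continuous_fst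
      apply Continuous.mul continuous_const
      apply Real.continuous_exp.comp
      continuity
    have hg : Integrable (fun p : ℝ × ℝ =>
        (p.1 * (2 * α * Real.exp (-(α * (3/2) * p.1 ^ 2)))) * 1)
        ((volume.restrict (Ioi (0:ℝ))).prod (volume.restrict (Ioc (0:ℝ) 1))) := by
      refine Integrable.mul_prod
        (f := fun ℓ : ℝ => ℓ * (2 * α * Real.exp (-(α * (3/2) * ℓ ^ 2))))
        (g := fun _ : ℝ => (1:ℝ)) ?_ (integrable_const 1)
      have hb : (0:ℝ) < α * (3/2) := by linarith
      have := ((integrable_mul_exp_neg_mul_sq hb).const_mul (2*α)).restrict (s := Ioi (0:ℝ))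
      refine this.congr ?_
      filter_upwards with x
      simp only [neg_mul]
      ring
    refine hg.mono' hmeas ?_
    rw [Measure.prod_restrict]
    filter_upwards [ae_restrict_mem (measurableSet_Ioi.prod measurableSet_Ioc)] with p hp
    obtain ⟨hp1, hp2⟩ := hp
    have hℓ : (0:ℝ) < p.1 := hp1
    simp only [Function.uncurry, mul_one]
    rw [Real.norm_of_nonneg (by positivity)]
    gcongr
    exact q_ge p.2
  rw [MeasureTheory.integral_integral_swap hfub]
  have step3 : ∀ t ∈ Ioc (0:ℝ) 1,
      (∫ ℓ in Ioi (0:ℝ), ℓ * (2 * α * Real.exp (-(α * (2*t^2-2*t+2) * ℓ ^ 2))))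
        = (2*t^2-2*t+2)⁻¹ := by
    intro t _
    have hb : (0:ℝ) < α * (2*t^2-2*t+2) := mul_pos hα (q_pos t)
    have h : (∫ ℓ in Ioi (0:ℝ), ℓ * (2 * α * Real.exp (-(α * (2*t^2-2*t+2) * ℓ ^ 2))))
        = ∫ ℓ in Ioi (0:ℝ), (2 * α) * (ℓ * Real.exp (-(α * (2*t^2-2*t+2) * ℓ ^ 2))) := by
      congr 1; ext ℓ; ring
    rw [h, MeasureTheory.integral_const_mul, gauss_Ioi hb]
    field_simp
  rw [setIntegral_congr_fun measurableSet_Ioc step3]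
  rw [← intervalIntegral.integral_of_le zero_le_one]
  exact arctan_integral

/-- for θ = 2π/k with k ≥ 4 even and α = cos(θ/2)/(4 sin(θ/2)),
∫₀^∞ ∫₀^ℓ 2α·exp(−αℓ²)·exp(−α(r² + (ℓ−r)²)) dr dℓ = π√3/9. -/
theorem stmt_14 (k : ℕ) (hk : 4 ≤ k) (hke : Even k) :
    let θ : ℝ := 2 * π / k
    let α : ℝ := Real.cos (θ / 2) / (4 * Real.sin (θ / 2))
    (∫ ℓ in Set.Ioi (0:ℝ),
        ∫ r in (0:ℝ)..ℓ,
          2 * α * Real.exp (-(α * ℓ ^ 2)) * Real.exp (-(α * (r ^ 2 + (ℓ - r) ^ 2))))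
      = π * Real.sqrt 3 / 9 := by
  intro θ α
  apply key
  have hk4 : (4:ℝ) ≤ (k:ℝ) := by exact_mod_cast hk
  have hkpos : (0:ℝ) < (k:ℝ) := by linarith
  have hθ : θ / 2 = π / (k:ℝ) := by
    show 2 * π / (k:ℝ) / 2 = π / (k:ℝ); ring
  have h1 : 0 < π / (k:ℝ) := div_pos Real.pi_pos hkpos
  have h2 : π / (k:ℝ) < π / 2 := by
    rw [div_lt_div_iff₀ hkpos two_pos]
    nlinarith [Real.pi_pos]
  have h3 : π / (k:ℝ) < π := div_lt_self Real.pi_pos (by linarith)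
  show (0:ℝ) < Real.cos (θ/2) / (4 * Real.sin (θ/2))
  rw [hθ]
  exact div_pos (Real.cos_pos_of_mem_Ioo ⟨by linarith, h2⟩)
    (mul_pos (by norm_num) (Real.sin_pos_of_pos_of_lt_pi h1 h3))
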